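/- Let δ, γ, ρ, ρ̂ ∈ ℝ and let θ, ψ : ℝ → ℝ be differentiable functions with cos θ(τ) ≠ 0 for all τ, satisfying θ'(τ) = −δ cos θ cos ψ sin ψ − ρ̂ cos ψ and ψ'(τ) = γ sin θ − δ sin θ sin²ψ − ρ̂ tan θ sin ψ. Then the function E(τ) = ½(1 + γ sin²θ(τ) + δ cos²θ(τ) sin²ψ(τ)) + ½ρ̂(ρ + 2 cos θ(τ) sin ψ(τ)) is constant. -/

import Mathlib

open Real

theorem energy_conserved_rigid_body_with_rotor
    (δ γ ρ ρh : ℝ) (θ ψ : ℝ → ℝ)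
    (hθd : Differentiable ℝ θ) (hψd : Differentiable ℝ ψ)
    (hcos : ∀ τ, Real.cos (θ τ) ≠ 0)
    (hθ' : ∀ τ, deriv θ τ =
      -δ * Real.cos (θ τ) * Real.cos (ψ τ) * Real.sin (ψ τ) - ρh * Real.cos (ψ τ))
    (hψ' : ∀ τ, deriv ψ τ =
      γ * Real.sin (θ τ) - δ * Real.sin (θ τ) * Real.sin (ψ τ) ^ 2
        - ρh * Real.tan (θ τ) * Real.sin (ψ τ)) :
    ∀ τ₁ τ₂ : ℝ,
      (1 / 2) * (1 + γ * Real.sin (θ τ₁) ^ 2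
          + δ * Real.cos (θ τ₁) ^ 2 * Real.sin (ψ τ₁) ^ 2)
        + (1 / 2) * ρh * (ρ + 2 * Real.cos (θ τ₁) * Real.sin (ψ τ₁))
      = (1 / 2) * (1 + γ * Real.sin (θ τ₂) ^ 2
          + δ * Real.cos (θ τ₂) ^ 2 * Real.sin (ψ τ₂) ^ 2)
        + (1 / 2) * ρh * (ρ + 2 * Real.cos (θ τ₂) * Real.sin (ψ τ₂)) := by
  set E : ℝ → ℝ := fun τ =>
    (1 / 2) * (1 + γ * Real.sin (θ τ) ^ 2
        + δ * Real.cos (θ τ) ^ 2 * Real.sin (ψ τ) ^ 2)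
      + (1 / 2) * ρh * (ρ + 2 * Real.cos (θ τ) * Real.sin (ψ τ)) with hE
  have key : ∀ τ, HasDerivAt E 0 τ := by
    intro τ
    have hθt : HasDerivAt θ (deriv θ τ) τ := (hθd τ).hasDerivAt
    have hψt : HasDerivAt ψ (deriv ψ τ) τ := (hψd τ).hasDerivAt
    have hsθ : HasDerivAt (fun τ => Real.sin (θ τ))
        (Real.cos (θ τ) * deriv θ τ) τ := (Real.hasDerivAt_sin (θ τ)).comp τ hθt
    have hcθ : HasDerivAt (fun τ => Real.cos (θ τ))
        (-Real.sin (θ τ) * deriv θ τ) τ := (Real.hasDerivAt_cos (θ τ)).comp τ hθt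
    have hsψ : HasDerivAt (fun τ => Real.sin (ψ τ))
        (Real.cos (ψ τ) * deriv ψ τ) τ := (Real.hasDerivAt_sin (ψ τ)).comp τ hψt
    have h := (((hsθ.pow 2).const_mul γ).const_add 1 |>.add
        ((((hcθ.pow 2).mul (hsψ.pow 2))).const_mul δ)).const_mul (1/2) |>.add
        ((((hcθ.mul hsψ).const_mul 2).const_add ρ).const_mul ((1/2) * ρh))
    rw [hθ' τ, hψ' τ, Real.tan_eq_sin_div_cos] at h
    have hc := hcos τ
    convert h using 1
    · rfl
    · rfl
    · funext x; simp only [hE, Pi.add_apply, Pi.mul_apply, Pi.pow_apply]; ring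
    · simp only [Pi.pow_apply]
      field_simp
      ring
  have hconst := fun τ₁ τ₂ =>
    (is_const_of_deriv_eq_zero (fun τ => (key τ).differentiableAt)
      (fun τ => (key τ).deriv) τ₁ τ₂ : E τ₁ = E τ₂)
  intro τ₁ τ₂
  exact hconst τ₁ τ₂
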